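/- Among all absolutely continuous probability densities on R^n with zero mean satisfying the second-moment constraint E[‖x‖²_{P⁻¹}] ≤ c for a fixed positive definite matrix P and c > 0, the zero-mean Gaussian density with covariance (c/n)·P uniquely maximizes differential entropy. -/

import Mathlib

open MeasureTheory Real Matrix

/-- Zero-mean Gaussian density on ℝⁿ with covariance matrix `S`. -/
noncomputable def gaussDensity {n : ℕ} (S : Matrix (Fin n) (Fin n) ℝ)
    (x : Fin n → ℝ) : ℝ :=
  (2 * π) ^ (-(n : ℝ) / 2) * (Real.sqrt S.det)⁻¹ *
    Real.exp (-(x ⬝ᵥ S⁻¹ *ᵥ x) / 2)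

/-- Differential entropy of a density on ℝⁿ. -/
noncomputable def diffEntropy {n : ℕ} (p : (Fin n → ℝ) → ℝ) : ℝ :=
  -∫ x, p x * Real.log (p x)

section Aux
variable {n : ℕ}


lemma int_g1 : ∫ x : ℝ, Real.exp (-x^2/2) = Real.sqrt (2*π) := by
  have h : ∀ x : ℝ, -x^2/2 = -(1/2 : ℝ) * x^2 := fun x => by ring
  simp_rw [h, integral_gaussian]
  rw [div_div_eq_mul_div, div_one]
  norm_num [mul_comm]

lemma integrable_g1 : Integrable (fun x : ℝ => Real.exp (-x^2/2)) := by
  have h : ∀ x : ℝ, -x^2/2 = -(1/2 : ℝ) * x^2 := fun x => by ring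
  simp_rw [h]
  exact integrable_exp_neg_mul_sq (by norm_num)

lemma integrable_m1 : Integrable (fun x : ℝ => x^2 * Real.exp (-x^2/2)) := by
  have h := integrable_rpow_mul_exp_neg_mul_sq (b := 1/2) (by norm_num) (s := 2) (by norm_num)
  simp_rw [rpow_two] at h
  convert h using 2 with x
  ring_nf

lemma int_m1 : ∫ x : ℝ, x^2 * Real.exp (-x^2/2) = Real.sqrt (2*π) := by
  have h : (fun x : ℝ => x^2 * Real.exp (-x^2/2)) = fun x : ℝ => |x|^2 * Real.exp (-|x|^2/2) := by
    ext x; rw [sq_abs]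
  rw [h, integral_comp_abs (f := fun x : ℝ => x^2 * Real.exp (-x^2/2))]
  have h2 : ∀ᵉ (x ∈ Set.Ioi (0:ℝ)), x^2 * Real.exp (-x^2/2) = x ^ (2:ℝ) * Real.exp (-(1/2:ℝ) * x ^ (2:ℝ)) := by
    intro x hx
    rw [rpow_two]; ring_nf
  rw [setIntegral_congr_fun measurableSet_Ioi h2,
    integral_rpow_mul_exp_neg_mul_rpow (by norm_num) (by norm_num) (by norm_num)]
  have : ((2:ℝ) + 1) / 2 = 1/2 + 1 := by norm_num
  rw [this, Real.Gamma_add_one (by norm_num), Real.Gamma_one_half_eq]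
  rw [show (-((2:ℝ)+1)/2) = (-(3/2) : ℝ) by norm_num]
  rw [show ((1:ℝ)/2) = 2⁻¹ by norm_num]
  rw [Real.inv_rpow (by norm_num), ← Real.rpow_neg (by norm_num), neg_neg]
  rw [show ((3:ℝ)/2) = 1 + 1/2 by norm_num, Real.rpow_add (by norm_num), Real.rpow_one]
  rw [← Real.sqrt_eq_rpow, Real.sqrt_mul (by norm_num : (0:ℝ) ≤ 2) π]; ring




lemma stdG_prod (y : Fin n → ℝ) :
    Real.exp (-(y ⬝ᵥ y)/2) = ∏ i, Real.exp (-(y i)^2/2) := by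
  rw [← Real.exp_sum]
  congr 1
  simp only [dotProduct, neg_div, ← Finset.sum_div, Finset.sum_neg_distrib]
  congr 1
  · congr 1
    exact Finset.sum_congr rfl (fun i _ => by ring)

lemma integrable_stdG : Integrable (fun y : Fin n → ℝ => Real.exp (-(y ⬝ᵥ y)/2)) := by
  simp_rw [stdG_prod]
  exact Integrable.fintype_prod (fun i => integrable_g1)

lemma integral_stdG : ∫ y : Fin n → ℝ, Real.exp (-(y ⬝ᵥ y)/2) = (2*π) ^ ((n:ℝ)/2) := by
  simp_rw [stdG_prod]
  rw [integral_fintype_prod_volume_eq_pow (ι := Fin n) (fun x : ℝ => Real.exp (-x^2/2)), int_g1,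
    Fintype.card_fin]
  rw [Real.sqrt_eq_rpow, ← Real.rpow_natCast ((2*π) ^ ((1:ℝ)/2)) n,
    ← Real.rpow_mul (by positivity)]
  congr 1
  ring

lemma prod_split (y : Fin n → ℝ) (i : Fin n) :
    (∏ j, ((if j = i then (y j)^2 else 1) * Real.exp (-(y j)^2/2)))
      = (y i)^2 * ∏ j, Real.exp (-(y j)^2/2) := by
  rw [Finset.prod_mul_distrib, Finset.prod_ite_eq' Finset.univ i (fun j => (y j)^2)]
  simp

lemma integrable_mstdG :
    Integrable (fun y : Fin n → ℝ => (y ⬝ᵥ y) * Real.exp (-(y ⬝ᵥ y)/2)) := by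
  have : ∀ y : Fin n → ℝ, (y ⬝ᵥ y) * Real.exp (-(y ⬝ᵥ y)/2)
      = ∑ i, ∏ j, ((if j = i then (y j)^2 else 1) * Real.exp (-(y j)^2/2)) := by
    intro y
    simp_rw [prod_split, ← Finset.sum_mul, ← stdG_prod]
    congr 1
    simp [dotProduct, sq]
  simp_rw [this]
  refine integrable_finset_sum _ (fun i _ => ?_)
  refine Integrable.fintype_prod (f := fun j (t:ℝ) => (if j = i then t^2 else 1) * Real.exp (-t^2/2)) (fun j => ?_)
  by_cases h : j = i <;> simp [h, integrable_m1, integrable_g1]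

lemma integral_mstdG :
    ∫ y : Fin n → ℝ, (y ⬝ᵥ y) * Real.exp (-(y ⬝ᵥ y)/2) = n * (2*π) ^ ((n:ℝ)/2) := by
  have h : ∀ y : Fin n → ℝ, (y ⬝ᵥ y) * Real.exp (-(y ⬝ᵥ y)/2)
      = ∑ i, ∏ j, ((if j = i then (y j)^2 else 1) * Real.exp (-(y j)^2/2)) := by
    intro y
    simp_rw [prod_split, ← Finset.sum_mul, ← stdG_prod]
    congr 1
    simp [dotProduct, sq]
  simp_rw [h]
  rw [integral_finset_sum]
  · have : ∀ i : Fin n, ∫ y : Fin n → ℝ,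
        ∏ j, ((if j = i then (y j)^2 else 1) * Real.exp (-(y j)^2/2)) = (2*π) ^ ((n:ℝ)/2) := by
      intro i
      rw [integral_fintype_prod_volume_eq_prod (ι := Fin n)
        (f := fun j (t:ℝ) => (if j = i then t^2 else 1) * Real.exp (-t^2/2))]
      have : ∀ j : Fin n, (∫ t : ℝ, (if j = i then t^2 else 1) * Real.exp (-t^2/2)) = Real.sqrt (2*π) := by
        intro j
        by_cases hj : j = i <;> simp [hj, int_m1, int_g1]
      simp_rw [this, Finset.prod_const, Finset.card_univ, Fintype.card_fin]
      rw [Real.sqrt_eq_rpow, ← Real.rpow_natCast ((2*π) ^ ((1:ℝ)/2)) n,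
        ← Real.rpow_mul (by positivity)]
      congr 1; ring
    simp_rw [this, Finset.sum_const, Finset.card_univ, Fintype.card_fin, nsmul_eq_mul]
  · intro i _
    refine Integrable.fintype_prod (f := fun j (t:ℝ) => (if j = i then t^2 else 1) * Real.exp (-t^2/2)) (fun j => ?_)
    by_cases h : j = i <;> simp [h, integrable_m1, integrable_g1]

lemma comp_mulVec {M : Matrix (Fin n) (Fin n) ℝ} (hM : M.det ≠ 0) {f : (Fin n → ℝ) → ℝ}
    (hfc : Continuous f) (hfi : Integrable f) :
    Integrable (fun x => f (M *ᵥ x)) ∧ ∫ x, f (M *ᵥ x) = |M.det|⁻¹ * ∫ y, f y := by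
  have hmap := Real.map_matrix_volume_pi_eq_smul_volume_pi hM
  have hT : Continuous (Matrix.toLin' M) := LinearMap.continuous_on_pi _
  have hfm : AEStronglyMeasurable f (Measure.map (Matrix.toLin' M) volume) :=
    hfc.aestronglyMeasurable
  have happ : ∀ x, Matrix.toLin' M x = M *ᵥ x := fun x => Matrix.toLin'_apply M x
  constructor
  · have : Integrable f (Measure.map (Matrix.toLin' M) volume) := by
      rw [hmap]
      exact hfi.smul_measure ENNReal.ofReal_ne_top
    have := (integrable_map_measure hfm hT.measurable.aemeasurable).mp this
    simpa [Function.comp_def, happ] using this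
  · have h1 : ∫ y, f y ∂(Measure.map (Matrix.toLin' M) volume) = ∫ x, f (Matrix.toLin' M x) := by
      exact integral_map hT.measurable.aemeasurable hfm
    rw [hmap] at h1
    rw [integral_smul_measure] at h1
    simp_rw [happ] at h1
    rw [← h1, ENNReal.toReal_ofReal (abs_nonneg _), abs_inv, smul_eq_mul]
lemma continuous_dotSelf : Continuous (fun y : Fin n → ℝ => y ⬝ᵥ y) := by
  unfold dotProduct
  exact continuous_finset_sum _ (fun i _ => (continuous_apply i).mul (continuous_apply i))

open scoped MatrixOrder in
lemma gauss_facts {S : Matrix (Fin n) (Fin n) ℝ} (hS : S.PosDef) :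
    Integrable (gaussDensity S) ∧ (∫ x, gaussDensity S x) = 1 ∧
    Integrable (fun x => (x ⬝ᵥ S⁻¹ *ᵥ x) * gaussDensity S x) ∧
    (∫ x, (x ⬝ᵥ S⁻¹ *ᵥ x) * gaussDensity S x) = n := by
  classical
  have hQ : (S⁻¹).PosDef := hS.inv
  set L := CFC.sqrt (S⁻¹) with hLdef
  have hLps : L.PosSemidef := (CFC.sqrt_nonneg _).posSemidef
  have hLL : L * L = S⁻¹ := CFC.sqrt_mul_sqrt_self _ hQ.posSemidef.nonneg
  have hLsym : Lᵀ = L := by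
    have := hLps.1
    rwa [Matrix.IsHermitian, conjTranspose_eq_transpose_of_trivial] at this
  have hdetS : 0 < S.det := hS.det_pos
  have hdetQ : 0 < (S⁻¹).det := hQ.det_pos
  have hdetL2 : L.det * L.det = (S⁻¹).det := by rw [← det_mul, hLL]
  have habsdetL : |L.det| = Real.sqrt (S⁻¹).det := by
    rw [← hdetL2, Real.sqrt_mul_self_eq_abs]
  have hdetLne : L.det ≠ 0 := by
    intro h
    rw [h, mul_zero] at hdetL2
    exact hdetQ.ne hdetL2
  have hdetSinv : (S⁻¹).det = S.det⁻¹ := by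
    rw [det_nonsing_inv, Ring.inverse_eq_inv']
  have habs : |L.det|⁻¹ = Real.sqrt S.det := by
    rw [habsdetL, hdetSinv, Real.sqrt_inv, inv_inv]
  have hquad : ∀ x, x ⬝ᵥ S⁻¹ *ᵥ x = (L *ᵥ x) ⬝ᵥ (L *ᵥ x) := by
    intro x
    rw [← hLL, ← mulVec_mulVec, dotProduct_mulVec]
    congr 1
    rw [← mulVec_transpose, hLsym]
  set A : ℝ := (2 * π) ^ (-(n : ℝ) / 2) * (Real.sqrt S.det)⁻¹ with hA
  have hApos : 0 < A := by
    apply mul_pos (Real.rpow_pos_of_pos (by positivity) _)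
    exact inv_pos.mpr (Real.sqrt_pos.mpr hdetS)
  have hgd : ∀ x, gaussDensity S x = A * Real.exp (-((L *ᵥ x) ⬝ᵥ (L *ᵥ x))/2) := by
    intro x
    rw [gaussDensity, hquad]
  have hgcont : Continuous (fun y : Fin n → ℝ => Real.exp (-(y ⬝ᵥ y)/2)) :=
    Real.continuous_exp.comp (continuous_dotSelf.neg.div_const 2)
  have hmcont : Continuous (fun y : Fin n → ℝ => (y ⬝ᵥ y) * Real.exp (-(y ⬝ᵥ y)/2)) :=
    continuous_dotSelf.mul hgcont
  obtain ⟨hci, hce⟩ := comp_mulVec (n := n) hdetLne hgcont integrable_stdG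
  obtain ⟨hmi, hme⟩ := comp_mulVec (n := n) hdetLne hmcont integrable_mstdG
  have hpow : (2 * π) ^ (-(n : ℝ) / 2) * (2*π) ^ ((n:ℝ)/2) = 1 := by
    rw [← Real.rpow_add (by positivity), neg_div, neg_add_cancel, Real.rpow_zero]
  have hsq : (Real.sqrt S.det)⁻¹ * Real.sqrt S.det = 1 :=
    inv_mul_cancel₀ (Real.sqrt_pos.mpr hdetS).ne'
  refine ⟨?_, ?_, ?_, ?_⟩
  · have : Integrable (fun x => A * Real.exp (-((L *ᵥ x) ⬝ᵥ (L *ᵥ x))/2)) := hci.const_mul A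
    exact this.congr (Filter.Eventually.of_forall (fun x => (hgd x).symm))
  · calc ∫ x, gaussDensity S x = ∫ x, A * Real.exp (-((L *ᵥ x) ⬝ᵥ (L *ᵥ x))/2) := by
          simp_rw [hgd]
      _ = A * (|L.det|⁻¹ * ((2*π) ^ ((n:ℝ)/2))) := by
          rw [integral_const_mul, hce, integral_stdG]
      _ = 1 := by
          rw [habs, hA]
          calc (2 * π) ^ (-(n : ℝ) / 2) * (Real.sqrt S.det)⁻¹ * (Real.sqrt S.det * (2*π) ^ ((n:ℝ)/2))
              = ((2 * π) ^ (-(n : ℝ) / 2) * (2*π) ^ ((n:ℝ)/2)) * ((Real.sqrt S.det)⁻¹ * Real.sqrt S.det) := by ring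
            _ = 1 := by rw [hpow, hsq, mul_one]
  · have : Integrable (fun x => A * (((L *ᵥ x) ⬝ᵥ (L *ᵥ x)) * Real.exp (-((L *ᵥ x) ⬝ᵥ (L *ᵥ x))/2))) :=
      hmi.const_mul A
    refine this.congr (Filter.Eventually.of_forall (fun x => ?_))
    simp only [hgd, hquad]
    ring
  · calc ∫ x, (x ⬝ᵥ S⁻¹ *ᵥ x) * gaussDensity S x
        = ∫ x, A * (((L *ᵥ x) ⬝ᵥ (L *ᵥ x)) * Real.exp (-((L *ᵥ x) ⬝ᵥ (L *ᵥ x))/2)) := by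
          refine integral_congr_ae (Filter.Eventually.of_forall (fun x => ?_))
          simp only [hgd, hquad]; ring
      _ = A * (|L.det|⁻¹ * ((n : ℝ) * (2*π) ^ ((n:ℝ)/2))) := by
          rw [integral_const_mul, hme, integral_mstdG]
      _ = (n : ℝ) := by
          rw [habs, hA]
          calc (2 * π) ^ (-(n : ℝ) / 2) * (Real.sqrt S.det)⁻¹ * (Real.sqrt S.det * ((n:ℝ) * (2*π) ^ ((n:ℝ)/2)))
              = ((2 * π) ^ (-(n : ℝ) / 2) * (2*π) ^ ((n:ℝ)/2)) * ((Real.sqrt S.det)⁻¹ * Real.sqrt S.det) * n := by ring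
            _ = (n : ℝ) := by rw [hpow, hsq]; ring

end Aux

lemma gibbs_pt {a b : ℝ} (ha : 0 ≤ a) (hb : 0 < b) :
    a * Real.log b - a * Real.log a ≤ b - a := by
  rcases ha.eq_or_lt with h | h
  · simp [← h]; linarith
  · have hlog := Real.log_le_sub_one_of_pos (div_pos hb h)
    have : a * Real.log (b/a) ≤ a * (b/a - 1) := by
      exact mul_le_mul_of_nonneg_left hlog ha
    rw [Real.log_div hb.ne' h.ne'] at this
    have hba : a * (b/a - 1) = b - a := by field_simp
    nlinarith
  
lemma gibbs_pt_eq {a b : ℝ} (ha : 0 ≤ a) (hb : 0 < b)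
    (h : b - a - (a * Real.log b - a * Real.log a) = 0) : a = b := by
  rcases ha.eq_or_lt with h0 | h0
  · exfalso; rw [← h0] at h; simp at h; linarith
  · by_contra hne
    have hba : b / a ≠ 1 := by
      intro hh
      exact hne ((div_eq_one_iff_eq h0.ne').mp hh).symm
    have hlog := Real.log_lt_sub_one_of_pos (div_pos hb h0) hba
    have : a * Real.log (b/a) < a * (b/a - 1) := by
      exact mul_lt_mul_of_pos_left hlog h0
    rw [Real.log_div hb.ne' h0.ne'] at this
    have hba2 : a * (b/a - 1) = b - a := by field_simp
    nlinarith

theorem gaussian_maximizes_entropy_under_weighted_moment {n : ℕ} (hn : 0 < n)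
    (P : Matrix (Fin n) (Fin n) ℝ) (hP : P.PosDef) (c : ℝ) (hc : 0 < c)
    (p : (Fin n → ℝ) → ℝ)
    (hp_nonneg : ∀ x, 0 ≤ p x)
    (hp_int : Integrable p)
    (hp_prob : ∫ x, p x = 1)
    (hp_mean : ∀ i, ∫ x, x i * p x = 0)
    (hp_moment_int : Integrable (fun x => (x ⬝ᵥ P⁻¹ *ᵥ x) * p x))
    (hp_moment : ∫ x, (x ⬝ᵥ P⁻¹ *ᵥ x) * p x ≤ c)
    (hp_ent_int : Integrable (fun x => p x * Real.log (p x))) :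
    diffEntropy p ≤ diffEntropy (gaussDensity ((c / n) • P)) ∧
      (diffEntropy p = diffEntropy (gaussDensity ((c / n) • P)) →
        p =ᵐ[volume] gaussDensity ((c / n) • P)) := by
  classical
  have hnR : (0:ℝ) < n := Nat.cast_pos.mpr hn
  have hk0 : (0:ℝ) < c / n := div_pos hc hnR
  set S : Matrix (Fin n) (Fin n) ℝ := (c / n) • P with hSdef
  -- S is positive definite
  have hS : S.PosDef := by
    refine Matrix.PosDef.of_dotProduct_mulVec_pos ?_ (fun x hx => ?_)
    · rw [Matrix.IsHermitian, conjTranspose_smul, hP.1]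
      congr 1
    · have h2 := hP.dotProduct_mulVec_pos hx
      rw [hSdef, smul_mulVec, dotProduct_smul]
      simp only [smul_eq_mul] at h2 ⊢
      exact mul_pos hk0 h2
  -- inverse quadratic form
  have hPdetunit : IsUnit P.det := isUnit_iff_ne_zero.mpr hP.det_pos.ne'
  have hSinv : S⁻¹ = (n / c : ℝ) • P⁻¹ := by
    have hinst : Invertible (c / (n:ℝ)) := invertibleOfNonzero hk0.ne'
    rw [hSdef, Matrix.inv_smul P (c/(n:ℝ)) hPdetunit, invOf_eq_inv]
    congr 1
    rw [inv_div]
  have hquadS : ∀ x : Fin n → ℝ, x ⬝ᵥ S⁻¹ *ᵥ x = (n / c) * (x ⬝ᵥ P⁻¹ *ᵥ x) := by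
    intro x
    rw [hSinv, smul_mulVec, dotProduct_smul, smul_eq_mul]
  obtain ⟨hq_int, hq1, hqm_int, hqm⟩ := gauss_facts hS
  set q := gaussDensity S with hqdef
  set A : ℝ := (2 * π) ^ (-(n : ℝ) / 2) * (Real.sqrt S.det)⁻¹ with hA
  have hApos : 0 < A :=
    mul_pos (Real.rpow_pos_of_pos (by positivity) _)
      (inv_pos.mpr (Real.sqrt_pos.mpr hS.det_pos))
  have hq_pos : ∀ x, 0 < q x := fun x => mul_pos hApos (Real.exp_pos _)
  have hlogq : ∀ x, Real.log (q x) = Real.log A - (x ⬝ᵥ S⁻¹ *ᵥ x) / 2 := by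
    intro x
    rw [hqdef, gaussDensity, ← hA, Real.log_mul hApos.ne' (Real.exp_pos _).ne', Real.log_exp]
    ring
  -- entropy of the gaussian
  have hent_q : diffEntropy q = -Real.log A + n / 2 := by
    have h1 : ∀ x, q x * Real.log (q x)
        = Real.log A * q x - (1/2) * ((x ⬝ᵥ S⁻¹ *ᵥ x) * q x) := by
      intro x; rw [hlogq x]; ring
    rw [diffEntropy]
    rw [integral_congr_ae (Filter.Eventually.of_forall h1),
      integral_sub (hq_int.const_mul _) (hqm_int.const_mul _),
      integral_const_mul, integral_const_mul, hq1, hqm]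
    ring
  -- integrability of p * log q
  have hpm_int : Integrable (fun x => (x ⬝ᵥ S⁻¹ *ᵥ x) * p x) := by
    have := hp_moment_int.const_mul (n / c : ℝ)
    refine this.congr (Filter.Eventually.of_forall (fun x => ?_))
    simp only [hquadS]; ring
  have hplogq_int : Integrable (fun x => p x * Real.log (q x)) := by
    have : Integrable (fun x => Real.log A * p x - (1/2) * ((x ⬝ᵥ S⁻¹ *ᵥ x) * p x)) :=
      (hp_int.const_mul _).sub (hpm_int.const_mul _)
    refine this.congr (Filter.Eventually.of_forall (fun x => ?_))
    simp only [hlogq]; ring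
  -- value of ∫ p log q
  have hIplogq : ∫ x, p x * Real.log (q x)
      = Real.log A - (1/2) * ((n/c) * ∫ x, (x ⬝ᵥ P⁻¹ *ᵥ x) * p x) := by
    have h1 : ∀ x, p x * Real.log (q x)
        = Real.log A * p x - (1/2) * ((n/c) * ((x ⬝ᵥ P⁻¹ *ᵥ x) * p x)) := by
      intro x; rw [hlogq x, hquadS x]; ring
    rw [integral_congr_ae (Filter.Eventually.of_forall h1),
      integral_sub (hp_int.const_mul _) ((hp_moment_int.const_mul _).const_mul _),
      integral_const_mul, integral_const_mul, integral_const_mul, hp_prob]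
    ring
  have hmom_le : (1/2) * ((n/c) * ∫ x, (x ⬝ᵥ P⁻¹ *ᵥ x) * p x) ≤ n / 2 := by
    have h2 : (n/c) * ∫ x, (x ⬝ᵥ P⁻¹ *ᵥ x) * p x ≤ (n/c) * c :=
      mul_le_mul_of_nonneg_left hp_moment (le_of_lt (div_pos hnR hc))
    rw [div_mul_cancel₀ _ hc.ne'] at h2
    linarith
  have hIplogq_ge : Real.log A - n/2 ≤ ∫ x, p x * Real.log (q x) := by
    rw [hIplogq]; linarith
  -- Gibbs inequality
  have hpt : ∀ x, p x * Real.log (q x) - p x * Real.log (p x) ≤ q x - p x :=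
    fun x => gibbs_pt (hp_nonneg x) (hq_pos x)
  have hlhs_int : Integrable (fun x => p x * Real.log (q x) - p x * Real.log (p x)) :=
    hplogq_int.sub hp_ent_int
  have hrhs_int : Integrable (fun x => q x - p x) := hq_int.sub hp_int
  have hgibbs : (∫ x, p x * Real.log (q x)) - ∫ x, p x * Real.log (p x) ≤ 0 := by
    have := integral_mono hlhs_int hrhs_int hpt
    rw [integral_sub hplogq_int hp_ent_int, integral_sub hq_int hp_int, hq1, hp_prob] at this
    linarith
  have hmain : diffEntropy p ≤ diffEntropy q := by
    rw [diffEntropy, hent_q]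
    have := hIplogq_ge
    linarith [hgibbs]
  refine ⟨hmain, fun heq => ?_⟩
  -- equality case
  have hE1 : -∫ x, p x * Real.log (p x) = -Real.log A + n/2 := by
    rw [show -∫ x, p x * Real.log (p x) = diffEntropy p from rfl, heq, hent_q]
  have hI0 : (∫ x, p x * Real.log (q x)) - ∫ x, p x * Real.log (p x) = 0 := by
    have h1 : ∫ x, p x * Real.log (p x) = Real.log A - n/2 := by linarith
    have h2 : ∫ x, p x * Real.log (q x) ≤ Real.log A - n/2 := by
      rw [← h1]; linarith
    linarith [hIplogq_ge]
  -- F := (q - p) - (p log q - p log p) ≥ 0 with ∫ F = 0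
  set F : (Fin n → ℝ) → ℝ :=
    fun x => (q x - p x) - (p x * Real.log (q x) - p x * Real.log (p x)) with hF
  have hF_nonneg : ∀ x, 0 ≤ F x := fun x => by
    have := hpt x; simp only [hF]; linarith
  have hF_int : Integrable F := hrhs_int.sub hlhs_int
  have hF_zero : ∫ x, F x = 0 := by
    simp only [hF]
    rw [integral_sub hrhs_int hlhs_int, integral_sub hq_int hp_int,
      integral_sub hplogq_int hp_ent_int, hq1, hp_prob]
    linarith
  have hF_ae : F =ᵐ[volume] 0 := by
    rw [← integral_eq_zero_iff_of_nonneg (fun x => hF_nonneg x) hF_int]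
    exact hF_zero
  filter_upwards [hF_ae] with x hx
  have : p x = q x := by
    apply gibbs_pt_eq (hp_nonneg x) (hq_pos x)
    simpa [hF] using hx
  exact this
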